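/- Let c_n ≥ 0 with c_1 ≥ 1, define b_n = Σ_{k≥0} Σ_{m_1+⋯+m_{k+1}=n} c_{m_1}⋯c_{m_{k+1}}, and suppose h = lim (b_n)^(1/n) exists in (0, ∞). Then Σ_{n=1}^N c_n h^(−n) ≤ 1 for every N. -/

import Mathlib

open Filter

private lemma stmt13_bnonneg (b c : ℕ → ℝ) (hc : ∀ n, 0 ≤ c n)
    (hb : ∀ n, 1 ≤ n → b n = ∑ comp : Composition n, ((comp.blocks.map c).prod))
    (n : ℕ) (hn : 1 ≤ n) : 0 ≤ b n := by
  rw [hb n hn]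
  refine Finset.sum_nonneg fun comp _ => List.prod_nonneg ?_
  intro a ha
  rw [List.mem_map] at ha
  obtain ⟨x, _, rfl⟩ := ha
  exact hc x

private lemma stmt13_key (b c : ℕ → ℝ) (hc : ∀ n, 0 ≤ c n)
    (hb : ∀ n, 1 ≤ n → b n = ∑ comp : Composition n, ((comp.blocks.map c).prod))
    (N k : ℕ) (hk : 1 ≤ k) (x : ℝ) (hx : 0 ≤ x) :
    (∑ n ∈ Finset.Icc 1 N, c n * x ^ n) ^ k ≤ ∑ M ∈ Finset.Icc k (k * N), b M * x ^ M := by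
  classical
  have expand : (∑ n ∈ Finset.Icc 1 N, c n * x ^ n) ^ k
      = ∑ p ∈ Fintype.piFinset (fun _ : Fin k => Finset.Icc 1 N),
          ∏ i : Fin k, (c (p i) * x ^ (p i)) := by
    rw [← Fin.prod_const k (∑ n ∈ Finset.Icc 1 N, c n * x ^ n), Finset.prod_univ_sum]
  rw [expand]
  have maps : ∀ p ∈ Fintype.piFinset (fun _ : Fin k => Finset.Icc 1 N),
      (∑ i, p i) ∈ Finset.Icc k (k * N) := by
    intro p hp
    rw [Fintype.mem_piFinset] at hp
    have h1 : k ≤ ∑ i, p i := by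
      calc (k : ℕ) = ∑ _i : Fin k, 1 := by simp
      _ ≤ ∑ i, p i := Finset.sum_le_sum fun i _ => (Finset.mem_Icc.mp (hp i)).1
    have h2 : ∑ i, p i ≤ k * N := by
      calc ∑ i, p i ≤ ∑ _i : Fin k, N := Finset.sum_le_sum fun i _ => (Finset.mem_Icc.mp (hp i)).2
      _ = k * N := by simp [Finset.sum_const, mul_comm]
    exact Finset.mem_Icc.mpr ⟨h1, h2⟩
  rw [← Finset.sum_fiberwise_of_maps_to maps]
  refine Finset.sum_le_sum fun M hM => ?_
  have hM1 : 1 ≤ M := le_trans hk (Finset.mem_Icc.mp hM).1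
  set s := Finset.filter (fun p => (∑ i, p i) = M)
      (Fintype.piFinset (fun _ : Fin k => Finset.Icc 1 N)) with hs
  have hsum : ∀ p ∈ s, ∏ i : Fin k, (c (p i) * x ^ (p i))
      = ((List.ofFn p).map c).prod * x ^ M := by
    intro p hp
    rw [Finset.mem_filter] at hp
    rw [Finset.prod_mul_distrib, List.map_ofFn, List.prod_ofFn]
    congr 1
    rw [← hp.2, Finset.prod_pow_eq_pow_sum]
  rw [Finset.sum_congr rfl hsum, ← Finset.sum_mul]
  have hxM : 0 ≤ x ^ M := pow_nonneg hx M
  refine mul_le_mul_of_nonneg_right ?_ hxM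
  rw [hb M hM1]
  have φdef : ∀ p : {q // q ∈ s}, ∃ cp : Composition M, cp.blocks = List.ofFn p.1 := by
    intro ⟨p, hp⟩
    rw [hs, Finset.mem_filter, Fintype.mem_piFinset] at hp
    refine ⟨⟨List.ofFn p, ?_, ?_⟩, rfl⟩
    · intro i hi
      rw [List.mem_ofFn] at hi
      obtain ⟨j, rfl⟩ := hi
      exact lt_of_lt_of_le one_pos (Finset.mem_Icc.mp (hp.1 j)).1
    · rw [List.sum_ofFn]; exact hp.2
  choose φ hφ using φdef
  have step : ∑ p ∈ s.attach, ((List.ofFn p.1).map c).prod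
      = ∑ p ∈ s.attach, ((φ p).blocks.map c).prod := by
    refine Finset.sum_congr rfl fun p _ => by rw [hφ p]
  rw [← Finset.sum_attach s (fun p => ((List.ofFn p).map c).prod), step]
  have inj : ∀ p ∈ s.attach, ∀ q ∈ s.attach, φ p = φ q → p = q := by
    intro p _ q _ hpq
    have : List.ofFn p.1 = List.ofFn q.1 := by
      rw [← hφ p, ← hφ q, hpq]
    exact Subtype.ext (List.ofFn_injective this)
  rw [← Finset.sum_image (f := fun cp : Composition M => (List.map c cp.blocks).prod) inj]
  refine Finset.sum_le_sum_of_subset_of_nonneg (Finset.subset_univ _) ?_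
  intro comp _ _
  refine List.prod_nonneg ?_
  intro a ha
  rw [List.mem_map] at ha
  obtain ⟨y, _, rfl⟩ := ha
  exact hc y

/-- If `c n ≥ 0`, `c 1 ≥ 1`, `b n` is the sum over compositions of `n` of products of
the `c`-values, and `h = lim (b n)^(1/n)` exists in `(0, ∞)`, then every partial sum
`∑_{n=1}^N c n · h^{-n}` is at most 1. -/
theorem stmt13 (b c : ℕ → ℝ) (hc : ∀ n, 0 ≤ c n) (hc1 : 1 ≤ c 1)
    (hb : ∀ n, 1 ≤ n → b n = ∑ comp : Composition n, ((comp.blocks.map c).prod))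
    (h : ℝ) (hh : 0 < h)
    (hlim : Tendsto (fun n : ℕ => (b n) ^ (1 / (n : ℝ))) atTop (nhds h)) :
    ∀ N : ℕ, ∑ n ∈ Finset.Icc 1 N, c n * h⁻¹ ^ n ≤ 1 := by
  intro N
  by_contra hS'
  push_neg at hS'
  set S := ∑ n ∈ Finset.Icc 1 N, c n * h⁻¹ ^ n with hSdef
  have hS0 : 0 ≤ S := Finset.sum_nonneg fun n _ =>
    mul_nonneg (hc n) (pow_nonneg (inv_nonneg.mpr hh.le) n)
  have hN : 1 ≤ N := by
    by_contra hN'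
    interval_cases N
    · simp [hSdef] at hS'; linarith
  have hNR : (0:ℝ) < 2 * N := by positivity
  set u : ℝ := S ^ ((1:ℝ) / (2 * N)) with hudef
  have hu1 : 1 < u := by
    rw [hudef]
    rw [Real.one_lt_rpow_iff hS0]
    exact Or.inl ⟨hS', by positivity⟩
  have hu0 : 0 < u := lt_trans one_pos hu1
  have huS : u ^ (2 * N) = S := by
    have he : (1:ℝ)/(2*(N:ℝ)) * ((2*N : ℕ):ℝ) = 1 := by
      push_cast; field_simp
    rw [hudef, ← Real.rpow_natCast (S ^ ((1:ℝ)/(2*N))) (2*N), ← Real.rpow_mul hS0, he,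
      Real.rpow_one]
  have hev : ∀ᶠ M in atTop, (b M) ^ (1 / (M:ℝ)) < h * u := by
    refine hlim.eventually_lt_const ?_
    nlinarith
  obtain ⟨K0, hK0⟩ := eventually_atTop.mp hev
  set K := max K0 1 with hKdef
  have hbM : ∀ M, K ≤ M → b M * h⁻¹ ^ M ≤ u ^ M := by
    intro M hM
    have hM1 : 1 ≤ M := le_trans (le_max_right _ _) hM
    have hb0 : 0 ≤ b M := stmt13_bnonneg b c hc hb M hM1
    have h1 : b M ^ (1/(M:ℝ)) < h * u := hK0 M (le_trans (le_max_left _ _) hM)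
    have h2 : b M ≤ (h * u) ^ M := by
      have h3 : (b M ^ (1/(M:ℝ))) ^ M ≤ (h * u) ^ M :=
        pow_le_pow_left₀ (Real.rpow_nonneg hb0 _) h1.le M
      rwa [← Real.rpow_natCast (b M ^ (1/(M:ℝ))) M, ← Real.rpow_mul hb0,
        one_div_mul_cancel (by positivity : ((M:ℕ):ℝ) ≠ 0), Real.rpow_one] at h3
    calc b M * h⁻¹ ^ M ≤ (h*u)^M * h⁻¹ ^ M := by
          exact mul_le_mul_of_nonneg_right h2 (pow_nonneg (inv_nonneg.mpr hh.le) M)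
    _ = u ^ M := by
          rw [mul_pow, mul_right_comm, ← mul_pow, mul_inv_cancel₀ hh.ne', one_pow, one_mul]
  have main : ∀ k, K ≤ k → u ^ (k * N) ≤ (k*N : ℕ) + 1 := by
    intro k hk
    have hk1 : 1 ≤ k := le_trans (le_max_right _ _) hk
    have step : S ^ k ≤ ((k*N : ℕ) + 1) * u ^ (k*N) := by
      calc S ^ k ≤ ∑ M ∈ Finset.Icc k (k*N), b M * h⁻¹ ^ M :=
            stmt13_key b c hc hb N k hk1 h⁻¹ (inv_nonneg.mpr hh.le)
      _ ≤ ∑ M ∈ Finset.Icc k (k*N), u ^ (k*N) := by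
            refine Finset.sum_le_sum fun M hM => ?_
            refine le_trans (hbM M (le_trans hk (Finset.mem_Icc.mp hM).1)) ?_
            exact pow_le_pow_right₀ hu1.le (Finset.mem_Icc.mp hM).2
      _ = ((Finset.Icc k (k*N)).card : ℝ) * u ^ (k*N) := by
            rw [Finset.sum_const, nsmul_eq_mul]
      _ ≤ ((k*N : ℕ) + 1) * u ^ (k*N) := by
            refine mul_le_mul_of_nonneg_right ?_ (pow_nonneg hu0.le _)
            rw [Nat.card_Icc]
            push_cast
            have : (k*N + 1 - k : ℕ) ≤ k*N + 1 := Nat.sub_le _ _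
            exact_mod_cast le_trans (Nat.cast_le.mpr this) (le_refl _)
    have hSk : S ^ k = u ^ (2*N*k) := by
      rw [← huS, ← pow_mul]
    rw [hSk] at step
    have hsplit : (2*N*k) = k*N + k*N := by ring
    rw [hsplit, pow_add] at step
    have hpos : (0:ℝ) < u ^ (k*N) := pow_pos hu0 _
    exact le_of_mul_le_mul_right step hpos
  -- final contradiction
  set w : ℝ := u ^ N with hwdef
  have hw1 : 1 < w := one_lt_pow₀ hu1 (by omega)
  have hw0 : (0:ℝ) < w - 1 := by linarith
  obtain ⟨j0, hj0⟩ := exists_nat_gt ((2*(N:ℝ)+1)/(w-1)^2)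
  set j := max j0 (max K 1) with hjdef
  have hjK : K ≤ 2*j := by
    have h1 : K ≤ j := le_trans (le_max_left K 1) (le_max_right j0 _)
    omega
  have hj1 : 1 ≤ j := le_trans (le_max_right _ _) (le_max_right j0 _)
  have hjR : (1:ℝ) ≤ (j:ℝ) := by exact_mod_cast hj1
  have hjbig : (2*(N:ℝ)+1) < (j:ℝ) * (w-1)^2 := by
    have hj0j : (j0:ℝ) ≤ (j:ℝ) := by exact_mod_cast le_max_left j0 _
    rw [div_lt_iff₀ (by positivity)] at hj0
    nlinarith
  have hmain := main (2*j) hjK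
  have hpow : u ^ (2*j*N) = (w^j)^2 := by
    rw [hwdef, ← pow_mul, ← pow_mul]
    ring_nf
  rw [hpow] at hmain
  have hlow : 1 + (j:ℝ)*(w-1) ≤ w^j := by
    have := one_add_mul_le_pow (by linarith : (-2:ℝ) ≤ w-1) j
    convert this using 2
    · rfl
    ring
  have hcast : ((2*j*N : ℕ):ℝ) + 1 = 2*(j:ℝ)*N + 1 := by push_cast; ring
  rw [hcast] at hmain
  have hsq : (1 + (j:ℝ)*(w-1))^2 ≤ (w^j)^2 := by
    have h0 : (0:ℝ) ≤ 1 + (j:ℝ)*(w-1) := by nlinarith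
    exact pow_le_pow_left₀ h0 hlow 2
  nlinarith [mul_lt_mul_of_pos_left hjbig (by linarith : (0:ℝ) < (j:ℝ)), sq_nonneg ((j:ℝ)*(w-1))]
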